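/- Let L be a subdirectly irreducible pk-algebra such that every prime filter of L that is not maximal is contained in every maximal prime filter of L. Then L satisfies a* ≤ C(b) ∨ T(a)* for all a, b ∈ L. -/
import Mathlib


/-- A pseudocomplemented De Morgan algebra (pm-algebra): a bounded distributive
lattice with a De Morgan involution `dm` and a pseudocomplement `pc`. -/
class PMAlgebra (L : Type*) extends DistribLattice L, BoundedOrder L where
  dm : L → L
  pc : L → L
  dm_dm : ∀ a : L, dm (dm a) = a
  dm_inf : ∀ a b : L, dm (a ⊓ b) = dm a ⊔ dm b
  pc_iff : ∀ a b : L, a ⊓ b = ⊥ ↔ b ≤ pc a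

namespace PMAlgebra

variable {L : Type*} [PMAlgebra L]

/-- A congruence of a pm-algebra. -/
def IsCongruence (θ : L → L → Prop) : Prop :=
  Equivalence θ ∧
  (∀ a b c d : L, θ a b → θ c d → θ (a ⊓ c) (b ⊓ d)) ∧
  (∀ a b c d : L, θ a b → θ c d → θ (a ⊔ c) (b ⊔ d)) ∧
  (∀ a b : L, θ a b → θ (dm a) (dm b)) ∧
  (∀ a b : L, θ a b → θ (pc a) (pc b))

/-- `L` is simple: it has more than one element and its only congruences are
equality and the total relation. -/
def Simple (L : Type*) [PMAlgebra L] : Prop :=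
  Nontrivial L ∧ ∀ θ : L → L → Prop, IsCongruence θ →
    θ = (fun a b => a = b) ∨ θ = (fun _ _ => True)

/-- `L` is subdirectly irreducible: there is a congruence `μ ≠ Eq` contained in
every congruence different from equality. -/
def SubdirectlyIrreducible (L : Type*) [PMAlgebra L] : Prop :=
  ∃ μ : L → L → Prop, IsCongruence μ ∧ μ ≠ (fun a b => a = b) ∧
    ∀ θ : L → L → Prop, IsCongruence θ → θ ≠ (fun a b => a = b) →
      ∀ a b : L, μ a b → θ a b

/-- A prime filter of the underlying lattice of `L`. -/
def IsPrimeFilter (P : Set L) : Prop :=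
  P.Nonempty ∧ P ≠ Set.univ ∧
  (∀ a b : L, a ∈ P → a ≤ b → b ∈ P) ∧
  (∀ a b : L, a ∈ P → b ∈ P → a ⊓ b ∈ P) ∧
  (∀ a b : L, a ⊔ b ∈ P → a ∈ P ∨ b ∈ P)

/-- The Birula–Rasiowa transformation. -/
def phi (P : Set L) : Set L := {a : L | dm a ∉ P}

/-- `P` is a maximal prime filter. -/
def IsMaximalPF (P : Set L) : Prop :=
  IsPrimeFilter P ∧ ∀ Q : Set L, IsPrimeFilter Q → P ⊆ Q → Q = P

/-- `P` is a minimal prime filter. -/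
def IsMinimalPF (P : Set L) : Prop :=
  IsPrimeFilter P ∧ ∀ Q : Set L, IsPrimeFilter Q → Q ⊆ P → Q = P

/-- The body of `L`: prime filters that are neither maximal nor minimal. -/
def body (L : Type*) [PMAlgebra L] : Set (Set L) :=
  {P : Set L | IsPrimeFilter P ∧ ¬ IsMaximalPF P ∧ ¬ IsMinimalPF P}

/-- The prime filter space of `L` is φ-connected. -/
def PhiConnected (L : Type*) [PMAlgebra L] : Prop :=
  ∀ S : Set (Set L), S ⊆ {P : Set L | IsPrimeFilter P} → S.Nonempty →
    (∀ P Q : Set L, P ∈ S → IsPrimeFilter Q → P ⊆ Q → Q ∈ S) →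
    (∀ P Q : Set L, P ∈ S → IsPrimeFilter Q → Q ⊆ P → Q ∈ S) →
    (∀ P : Set L, P ∈ S → phi P ∈ S) →
    S = {P : Set L | IsPrimeFilter P}

/-- The Kleene identity. -/
def Kleene (L : Type*) [PMAlgebra L] : Prop :=
  ∀ a b : L, a ⊓ dm a ≤ b ⊔ dm b

/-- The term `C(x) = (x ∧ x') ∨ (x ∧ x')*`. -/
def C (x : L) : L := (x ⊓ dm x) ⊔ pc (x ⊓ dm x)

/-- The term `T(x) = C(x) ∧ C(x)'`. -/
def T (x : L) : L := C x ⊓ dm (C x)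

end PMAlgebra

open PMAlgebra

section Auxiliary

variable {L : Type*} [PMAlgebra L]

/-- A proper filter-like structure avoiding an element `v` extends to a prime
filter avoiding `v` that is maximal among such. -/
lemma zorn_prime_aux (S : Set L) (v : L)
    (h1 : S.Nonempty)
    (h2 : ∀ x y : L, x ∈ S → x ≤ y → y ∈ S)
    (h3 : ∀ x y : L, x ∈ S → y ∈ S → x ⊓ y ∈ S)
    (h4 : v ∉ S) :
    ∃ P : Set L, IsPrimeFilter P ∧ S ⊆ P ∧ v ∉ P ∧
      ∀ G : Set L, (G.Nonempty ∧ (∀ x y : L, x ∈ G → x ≤ y → y ∈ G) ∧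
        (∀ x y : L, x ∈ G → y ∈ G → x ⊓ y ∈ G) ∧ v ∉ G) → P ⊆ G → G = P := by
  classical
  set 𝒞 : Set (Set L) := {G | G.Nonempty ∧ (∀ x y : L, x ∈ G → x ≤ y → y ∈ G) ∧
      (∀ x y : L, x ∈ G → y ∈ G → x ⊓ y ∈ G) ∧ v ∉ G ∧ S ⊆ G} with h𝒞
  have hS𝒞 : S ∈ 𝒞 := ⟨h1, h2, h3, h4, Set.Subset.rfl⟩
  obtain ⟨m, hSm, hm𝒞, hmax⟩ : ∃ m, S ⊆ m ∧ Maximal (· ∈ 𝒞) m := by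
    apply zorn_subset_nonempty 𝒞 ?_ S hS𝒞
    intro c hc𝒞 hchain hcne
    refine ⟨⋃₀ c, ?_, fun s hs => Set.subset_sUnion_of_mem hs⟩
    obtain ⟨G0, hG0⟩ := hcne
    obtain ⟨x0, hx0⟩ := (hc𝒞 hG0).1
    refine ⟨⟨x0, Set.mem_sUnion.2 ⟨G0, hG0, hx0⟩⟩, ?_, ?_, ?_, ?_⟩
    · rintro x y ⟨G, hG, hxG⟩ hxy
      exact ⟨G, hG, (hc𝒞 hG).2.1 x y hxG hxy⟩
    · rintro x y ⟨G, hG, hxG⟩ ⟨H, hH, hyH⟩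
      rcases hchain.total hG hH with hGH | hHG
      · exact ⟨H, hH, (hc𝒞 hH).2.2.1 x y (hGH hxG) hyH⟩
      · exact ⟨G, hG, (hc𝒞 hG).2.2.1 x y hxG (hHG hyH)⟩
    · rintro ⟨G, hG, hvG⟩
      exact (hc𝒞 hG).2.2.2.1 hvG
    · exact fun s hs => Set.mem_sUnion.2 ⟨G0, hG0, (hc𝒞 hG0).2.2.2.2 hs⟩
  obtain ⟨hmne, hmup, hminf, hvm, hSm'⟩ := hm𝒞
  have hmaxle : ∀ G ∈ 𝒞, m ⊆ G → G = m := fun G hG hmG =>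
    Set.Subset.antisymm (hmax hG hmG) hmG
  have hprime : ∀ x y : L, x ⊔ y ∈ m → x ∈ m ∨ y ∈ m := by
    intro x y hxy
    by_contra hcon
    push_neg at hcon
    obtain ⟨hx, hy⟩ := hcon
    -- enlarging with x or with y must hit v
    have key : ∀ z : L, z ∉ m → ∃ p ∈ m, z ⊓ p ≤ v := by
      intro z hz
      by_contra hk2
      push_neg at hk2
      set G : Set L := {w | ∃ p ∈ m, z ⊓ p ≤ w} with hGdef
      have hmG : m ⊆ G := fun p hp => ⟨p, hp, inf_le_right⟩
      have hG𝒞 : G ∈ 𝒞 := by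
        refine ⟨⟨z, ?_⟩, ?_, ?_, ?_, fun s hs => hmG (hSm hs)⟩
        · obtain ⟨p, hp⟩ := hmne
          exact ⟨p, hp, inf_le_left⟩
        · rintro w w' ⟨p, hp, hle⟩ hww'
          exact ⟨p, hp, hle.trans hww'⟩
        · rintro w w' ⟨p, hp, hle⟩ ⟨p', hp', hle'⟩
          refine ⟨p ⊓ p', hminf p p' hp hp', ?_⟩
          calc z ⊓ (p ⊓ p') ≤ (z ⊓ p) ⊓ (z ⊓ p') := by
                refine le_inf (inf_le_inf_left z inf_le_left) (inf_le_inf_left z inf_le_right)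
            _ ≤ w ⊓ w' := inf_le_inf hle hle'
        · rintro ⟨p, hp, hle⟩
          exact hk2 p hp hle
      have := hmaxle G hG𝒞 hmG
      have hzG : z ∈ G := by
        obtain ⟨p, hp⟩ := hmne
        exact ⟨p, hp, inf_le_left⟩
      rw [this] at hzG
      exact hz hzG
    obtain ⟨p1, hp1, hle1⟩ := key x hx
    obtain ⟨p2, hp2, hle2⟩ := key y hy
    have hmem : (x ⊔ y) ⊓ (p1 ⊓ p2) ∈ m := hminf _ _ hxy (hminf _ _ hp1 hp2)
    have hlev : (x ⊔ y) ⊓ (p1 ⊓ p2) ≤ v := by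
      rw [inf_sup_right]
      refine sup_le ?_ ?_
      · exact le_trans (inf_le_inf_left x inf_le_left) hle1
      · exact le_trans (inf_le_inf_left y inf_le_right) hle2
    exact hvm (hmup _ _ hmem hlev)
  have hne_univ : m ≠ Set.univ := fun h => hvm (h ▸ Set.mem_univ v)
  refine ⟨m, ⟨hmne, hne_univ, hmup, hminf, hprime⟩, hSm, hvm, ?_⟩
  intro G hG hmG
  exact hmaxle G ⟨hG.1, hG.2.1, hG.2.2.1, hG.2.2.2, hSm.trans hmG⟩ hmG

/-- Any "proper filter" (not containing `⊥`) extends to a maximal prime filter. -/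
lemma exists_maximalPF (S : Set L)
    (h1 : S.Nonempty)
    (h2 : ∀ x y : L, x ∈ S → x ≤ y → y ∈ S)
    (h3 : ∀ x y : L, x ∈ S → y ∈ S → x ⊓ y ∈ S)
    (h4 : (⊥ : L) ∉ S) :
    ∃ U : Set L, IsMaximalPF U ∧ S ⊆ U := by
  obtain ⟨P, hP, hSP, hvP, hmax⟩ := zorn_prime_aux S ⊥ h1 h2 h3 h4
  refine ⟨P, ⟨hP, ?_⟩, hSP⟩
  intro Q hQ hPQ
  have hbQ : (⊥ : L) ∉ Q := by
    intro hb
    exact hQ.2.1 (Set.eq_univ_of_forall fun z => hQ.2.2.1 ⊥ z hb bot_le)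
  exact hmax Q ⟨hQ.1, hQ.2.2.1, hQ.2.2.2.1, hbQ⟩ hPQ

lemma inf_pc_self (a : L) : a ⊓ pc a = ⊥ := (pc_iff a (pc a)).mpr le_rfl

lemma le_pc_pc (a : L) : a ≤ pc (pc a) :=
  (pc_iff (pc a) a).mp (by rw [inf_comm]; exact inf_pc_self a)

lemma pc_bot : pc (⊥ : L) = ⊤ :=
  le_antisymm le_top ((pc_iff ⊥ ⊤).mp (by simp))

lemma dm_top : dm (⊤ : L) = ⊥ := by
  have h := dm_inf (dm (⊥ : L)) ⊤
  rw [inf_top_eq, dm_dm] at h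
  exact le_bot_iff.mp (h ▸ le_sup_right)

/-- In a maximal prime filter, every element or its pseudocomplement belongs. -/
lemma maximalPF_mem_or_pc_mem {P : Set L} (hP : IsMaximalPF P) (z : L) :
    z ∈ P ∨ pc z ∈ P := by
  by_contra hcon
  push_neg at hcon
  obtain ⟨hz, hpz⟩ := hcon
  obtain ⟨hPprime, hPmax⟩ := hP
  obtain ⟨hne, _, hup, hinf, _⟩ := hPprime
  set S : Set L := {w | ∃ p ∈ P, z ⊓ p ≤ w} with hSdef
  have hPS : P ⊆ S := fun p hp => ⟨p, hp, inf_le_right⟩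
  have hzS : z ∈ S := by
    obtain ⟨p, hp⟩ := hne
    exact ⟨p, hp, inf_le_left⟩
  obtain ⟨U, hU, hSU⟩ := exists_maximalPF S ⟨z, hzS⟩
      (by rintro x y ⟨p, hp, hle⟩ hxy; exact ⟨p, hp, hle.trans hxy⟩)
      (by
        rintro x y ⟨p, hp, hle⟩ ⟨p', hp', hle'⟩
        refine ⟨p ⊓ p', hinf p p' hp hp', ?_⟩
        calc z ⊓ (p ⊓ p') ≤ (z ⊓ p) ⊓ (z ⊓ p') :=
              le_inf (inf_le_inf_left z inf_le_left) (inf_le_inf_left z inf_le_right)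
          _ ≤ x ⊓ y := inf_le_inf hle hle')
      (by
        rintro ⟨p, hp, hle⟩
        have : z ⊓ p = ⊥ := le_bot_iff.mp hle
        exact hpz (hup p (pc z) hp ((pc_iff z p).mp this)))
  have hUP : U = P := hPmax U hU.1 (hPS.trans hSU)
  exact hz (hUP ▸ hSU hzS)

/-- Birkhoff prime filter separation. -/
lemma prime_separation {u v : L} (h : ¬ u ≤ v) :
    ∃ P : Set L, IsPrimeFilter P ∧ u ∈ P ∧ v ∉ P := by
  obtain ⟨P, hP, hSP, hvP, -⟩ := zorn_prime_aux (Set.Ici u) v ⟨u, le_rfl⟩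
    (fun x y hx hxy => le_trans hx hxy)
    (fun x y hx hy => le_inf hx hy)
    (fun hv => h hv)
  exact ⟨P, hP, hSP le_rfl, hvP⟩

end Auxiliary

/-- A subdirectly irreducible pk-algebra in which every non-maximal prime
filter is contained in every maximal prime filter satisfies
`a* ≤ C(b) ∨ T(a)*`. -/
theorem identity_of_nonmax_subset_max {L : Type*} [PMAlgebra L]
    (hk : Kleene L) (hsi : SubdirectlyIrreducible L)
    (hbundle : ∀ P Q : Set L, IsPrimeFilter P → ¬ IsMaximalPF P →
      IsMaximalPF Q → P ⊆ Q) :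
    ∀ a b : L, pc a ≤ C b ⊔ pc (T a) := by
  intro a b
  by_contra hle
  obtain ⟨P, hP, hpa, hnot⟩ := prime_separation hle
  obtain ⟨hPne, hPuniv, hup, hinf, hprime⟩ := hP
  have hCb : C b ∉ P := fun h => hnot (hup _ _ h le_sup_left)
  have hTa : pc (T a) ∉ P := fun h => hnot (hup _ _ h le_sup_right)
  have he : b ⊓ dm b ∉ P := fun h => hCb (hup _ _ h le_sup_left)
  have hpe : pc (b ⊓ dm b) ∉ P := fun h => hCb (hup _ _ h le_sup_right)
  have hPnotmax : ¬ IsMaximalPF P := fun hmax =>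
    (maximalPF_mem_or_pc_mem hmax (b ⊓ dm b)).elim he hpe
  by_cases ha : a = ⊥
  · -- then `T a = ⊥` and `pc (T a) = ⊤ ∈ P`
    have hTbot : T a = ⊥ := by
      subst ha
      have hC : C (⊥ : L) = ⊤ := by
        unfold C
        rw [bot_inf_eq, pc_bot, bot_sup_eq]
      unfold T
      rw [hC, dm_top, inf_bot_eq]
    have htop : (⊤ : L) ∈ P := by
      obtain ⟨y, hy⟩ := hPne
      exact hup y ⊤ hy le_top
    exact hTa (by rw [hTbot, pc_bot]; exact htop)
  · -- extend the filter generated by `a**` to a maximal prime filter `V`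
    obtain ⟨V, hV, hSV⟩ := exists_maximalPF (Set.Ici (pc (pc a)))
      ⟨pc (pc a), le_rfl⟩
      (fun x y hx hxy => le_trans hx hxy)
      (fun x y hx hy => le_inf hx hy)
      (by
        intro hbot
        have : pc (pc a) = ⊥ := le_bot_iff.mp hbot
        exact ha (le_bot_iff.mp (this ▸ le_pc_pc a)))
    have hPV : P ⊆ V := hbundle P V ⟨hPne, hPuniv, hup, hinf, hprime⟩ hPnotmax hV
    obtain ⟨⟨hVne, hVuniv, hVup, hVinf, hVprime⟩, -⟩ := hV
    have h1 : pc a ∈ V := hPV hpa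
    have h2 : pc (pc a) ∈ V := hSV le_rfl
    have hb2 : (⊥ : L) ∈ V := by
      have := hVinf _ _ h1 h2
      rwa [inf_pc_self (pc a)] at this
    exact hVuniv (Set.eq_univ_of_forall fun z => hVup ⊥ z hb2 bot_le)
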